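/- Let g : (0,1) → [0,∞) be nonincreasing, δ > 0, and 0 < q₀ < q₁ < ∞. Then (∫₀¹ r^{δq₁ - 1} g(r)^{q₁} dr)^{1/q₁} ≤ C (∫₀¹ r^{δq₀ - 1} g(r)^{q₀} dr)^{1/q₀} for a constant C depending only on δ, q₀, q₁. -/

import Mathlib

open MeasureTheory Real Set

theorem stmt_16 (δ q₀ q₁ : ℝ) (hδ : 0 < δ) (hq₀ : 0 < q₀) (hq : q₀ < q₁) :
    ∃ C > 0, ∀ g : ℝ → ℝ, AntitoneOn g (Ioo (0 : ℝ) 1) →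
      (∀ r ∈ Ioo (0 : ℝ) 1, 0 ≤ g r) →
      (∫⁻ r in Ioo (0 : ℝ) 1,
          ENNReal.ofReal (r ^ (δ * q₁ - 1) * g r ^ q₁)) ^ (1 / q₁)
        ≤ ENNReal.ofReal C *
          (∫⁻ r in Ioo (0 : ℝ) 1,
            ENNReal.ofReal (r ^ (δ * q₀ - 1) * g r ^ q₀)) ^ (1 / q₀) := by
  have hq₁ : 0 < q₁ := hq₀.trans hq
  have hdq₀ : 0 < δ * q₀ := mul_pos hδ hq₀
  have he : 0 < (q₁ - q₀) / q₀ := div_pos (by linarith) hq₀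
  set C : ℝ := (δ * q₀) ^ ((q₁ - q₀) / (q₀ * q₁)) with hC
  have hCpos : 0 < C := Real.rpow_pos_of_pos hdq₀ _
  refine ⟨C, hCpos, fun g hg hg0 => ?_⟩
  set I : ENNReal := ∫⁻ r in Ioo (0 : ℝ) 1,
      ENNReal.ofReal (r ^ (δ * q₀ - 1) * g r ^ q₀) with hI
  by_cases hItop : I = ⊤
  · rw [hItop, ENNReal.top_rpow_of_pos (by positivity), ENNReal.mul_top
      (by simpa using hCpos)]
    exact le_top
  -- I is finite
  set A : ℝ := I.toReal with hA
  have hA0 : 0 ≤ A := ENNReal.toReal_nonneg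
  have hIA : I = ENNReal.ofReal A := (ENNReal.ofReal_toReal hItop).symm
  -- pointwise bound : g r ^ q₀ * (r ^ (δ*q₀) / (δ*q₀)) ≤ A for r ∈ (0,1)
  have key : ∀ r ∈ Ioo (0 : ℝ) 1, g r ^ q₀ * (r ^ (δ * q₀) / (δ * q₀)) ≤ A := by
    intro r hr
    have hr0 : 0 < r := hr.1
    have h1 : ∫⁻ t in Ioo (0 : ℝ) r,
        ENNReal.ofReal (t ^ (δ * q₀ - 1) * g r ^ q₀) ≤ I := by
      refine le_trans ?_ (lintegral_mono_set (Ioo_subset_Ioo le_rfl hr.2.le))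
      refine lintegral_mono_ae ?_
      filter_upwards [ae_restrict_mem measurableSet_Ioo] with t ht
      refine ENNReal.ofReal_le_ofReal ?_
      have htr : t ∈ Ioo (0 : ℝ) 1 := ⟨ht.1, ht.2.trans hr.2⟩
      have : g r ≤ g t := hg htr hr ht.2.le
      exact mul_le_mul_of_nonneg_left
        (Real.rpow_le_rpow (hg0 r hr) this hq₀.le) (Real.rpow_nonneg ht.1.le _)
    have h2 : ∫⁻ t in Ioo (0 : ℝ) r,
        ENNReal.ofReal (t ^ (δ * q₀ - 1) * g r ^ q₀)
        = ENNReal.ofReal (g r ^ q₀) *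
          ENNReal.ofReal (r ^ (δ * q₀) / (δ * q₀)) := by
      have hint : IntegrableOn (fun t : ℝ => t ^ (δ * q₀ - 1)) (Ioo 0 r) :=
        (intervalIntegral.integrableOn_Ioo_rpow_iff hr0).2 (by linarith)
      have hval : ∫ t in Ioo (0 : ℝ) r, t ^ (δ * q₀ - 1)
          = r ^ (δ * q₀) / (δ * q₀) := by
        rw [← MeasureTheory.integral_Ioc_eq_integral_Ioo,
          ← intervalIntegral.integral_of_le hr0.le,
          integral_rpow (Or.inl (by linarith))]
        rw [Real.zero_rpow (by linarith), sub_add_cancel, sub_zero]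
      calc ∫⁻ t in Ioo (0 : ℝ) r, ENNReal.ofReal (t ^ (δ * q₀ - 1) * g r ^ q₀)
          = ∫⁻ t in Ioo (0 : ℝ) r,
              ENNReal.ofReal (g r ^ q₀) * ENNReal.ofReal (t ^ (δ * q₀ - 1)) := by
            refine lintegral_congr_ae ?_
            filter_upwards [ae_restrict_mem measurableSet_Ioo] with t ht
            rw [← ENNReal.ofReal_mul (Real.rpow_nonneg (hg0 r hr) _), mul_comm]
        _ = ENNReal.ofReal (g r ^ q₀) *
              ∫⁻ t in Ioo (0 : ℝ) r, ENNReal.ofReal (t ^ (δ * q₀ - 1)) :=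
            lintegral_const_mul' _ _ ENNReal.ofReal_ne_top
        _ = ENNReal.ofReal (g r ^ q₀) * ENNReal.ofReal (r ^ (δ * q₀) / (δ * q₀)) := by
            congr 1
            rw [← ofReal_integral_eq_lintegral_ofReal hint ?_, hval]
            filter_upwards [ae_restrict_mem measurableSet_Ioo] with t ht
            exact Real.rpow_nonneg ht.1.le _
    rw [h2, hIA, ← ENNReal.ofReal_mul (Real.rpow_nonneg (hg0 r hr) _)] at h1
    exact le_trans (le_of_eq rfl)
      ((ENNReal.ofReal_le_ofReal_iff hA0).1 h1)
  -- pointwise bound on the integrand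
  set K : ℝ := (δ * q₀ * A) ^ ((q₁ - q₀) / q₀) with hK
  have hK0 : 0 ≤ K := Real.rpow_nonneg (by positivity) _
  have ptw : ∀ r ∈ Ioo (0 : ℝ) 1,
      r ^ (δ * q₁ - 1) * g r ^ q₁ ≤ K * (r ^ (δ * q₀ - 1) * g r ^ q₀) := by
    intro r hr
    have hr0 : 0 < r := hr.1
    rcases eq_or_lt_of_le (hg0 r hr) with h0 | h0
    · rw [← h0, Real.zero_rpow hq₁.ne', Real.zero_rpow hq₀.ne']
      simp
    · have hrp : (0:ℝ) < r ^ (δ * q₀) := Real.rpow_pos_of_pos hr0 _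
      have hb : g r ^ q₀ ≤ δ * q₀ * A * r ^ (-(δ * q₀)) := by
        have hk := key r hr
        have h4 : g r ^ q₀ * r ^ (δ * q₀) ≤ δ * q₀ * A := by
          calc g r ^ q₀ * r ^ (δ * q₀)
              = g r ^ q₀ * (r ^ (δ * q₀) / (δ * q₀)) * (δ * q₀) := by
                field_simp
            _ ≤ A * (δ * q₀) := mul_le_mul_of_nonneg_right hk hdq₀.le
            _ = δ * q₀ * A := by ring
        rw [Real.rpow_neg hr0.le, ← div_eq_mul_inv, le_div_iff₀ hrp]
        exact h4
      have hgpow : g r ^ (q₁ - q₀) ≤ K * r ^ (-(δ * (q₁ - q₀))) := by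
        have h3 : (g r ^ q₀) ^ ((q₁ - q₀) / q₀)
            ≤ (δ * q₀ * A * r ^ (-(δ * q₀))) ^ ((q₁ - q₀) / q₀) :=
          Real.rpow_le_rpow (by positivity) hb he.le
        have hexp : q₀ * ((q₁ - q₀) / q₀) = q₁ - q₀ := by field_simp
        rw [← Real.rpow_mul h0.le, hexp] at h3
        calc g r ^ (q₁ - q₀) ≤ (δ * q₀ * A * r ^ (-(δ * q₀))) ^ ((q₁ - q₀) / q₀) := h3
          _ = K * r ^ (-(δ * (q₁ - q₀))) := by
              rw [Real.mul_rpow (by positivity) (Real.rpow_nonneg hr0.le _),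
                ← Real.rpow_mul hr0.le]
              congr 2
              field_simp
      have hsplit : g r ^ q₁ = g r ^ q₀ * g r ^ (q₁ - q₀) := by
        rw [← Real.rpow_add h0]; ring_nf
      calc r ^ (δ * q₁ - 1) * g r ^ q₁
          = r ^ (δ * q₁ - 1) * g r ^ q₀ * g r ^ (q₁ - q₀) := by rw [hsplit]; ring
        _ ≤ r ^ (δ * q₁ - 1) * g r ^ q₀ * (K * r ^ (-(δ * (q₁ - q₀)))) := by
            refine mul_le_mul_of_nonneg_left hgpow (by positivity)
        _ = K * (r ^ (δ * q₁ - 1) * r ^ (-(δ * (q₁ - q₀))) * g r ^ q₀) := by ring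
        _ = K * (r ^ (δ * q₀ - 1) * g r ^ q₀) := by
            rw [← Real.rpow_add hr0]
            ring_nf
  -- integrate the pointwise bound
  have hmain : (∫⁻ r in Ioo (0 : ℝ) 1,
      ENNReal.ofReal (r ^ (δ * q₁ - 1) * g r ^ q₁)) ≤ ENNReal.ofReal K * I := by
    calc (∫⁻ r in Ioo (0 : ℝ) 1, ENNReal.ofReal (r ^ (δ * q₁ - 1) * g r ^ q₁))
        ≤ ∫⁻ r in Ioo (0 : ℝ) 1,
            ENNReal.ofReal K * ENNReal.ofReal (r ^ (δ * q₀ - 1) * g r ^ q₀) := by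
          refine lintegral_mono_ae ?_
          filter_upwards [ae_restrict_mem measurableSet_Ioo] with r hr
          rw [← ENNReal.ofReal_mul hK0]
          exact ENNReal.ofReal_le_ofReal (ptw r hr)
      _ = ENNReal.ofReal K * I := lintegral_const_mul' _ _ ENNReal.ofReal_ne_top
  -- conclude
  have h1q₁ : (0:ℝ) ≤ 1 / q₁ := by positivity
  calc (∫⁻ r in Ioo (0 : ℝ) 1,
      ENNReal.ofReal (r ^ (δ * q₁ - 1) * g r ^ q₁)) ^ (1 / q₁)
      ≤ (ENNReal.ofReal K * I) ^ (1 / q₁) :=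
        ENNReal.rpow_le_rpow hmain h1q₁
    _ = ENNReal.ofReal (K ^ (1 / q₁)) * ENNReal.ofReal (A ^ (1 / q₁)) := by
        rw [hIA, ENNReal.mul_rpow_of_nonneg _ _ h1q₁,
          ENNReal.ofReal_rpow_of_nonneg hK0 h1q₁,
          ENNReal.ofReal_rpow_of_nonneg hA0 h1q₁]
    _ = ENNReal.ofReal (K ^ (1 / q₁) * A ^ (1 / q₁)) := by
        rw [ENNReal.ofReal_mul (by positivity)]
    _ ≤ ENNReal.ofReal (C * A ^ (1 / q₀)) := by
        refine ENNReal.ofReal_le_ofReal ?_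
        have hexp2 : (q₁ - q₀) / q₀ * (1 / q₁) = (q₁ - q₀) / (q₀ * q₁) := by
          rw [div_mul_div_comm, mul_one]
        have hKval : K ^ (1 / q₁)
            = C * A ^ ((q₁ - q₀) / (q₀ * q₁)) := by
          rw [hK, ← Real.rpow_mul (by positivity : (0:ℝ) ≤ δ * q₀ * A), hexp2,
            Real.mul_rpow (by positivity) hA0, hC]
        have hsum : (q₁ - q₀) / (q₀ * q₁) + 1 / q₁ = 1 / q₀ := by
          field_simp
          ring
        rw [hKval, mul_assoc]
        refine mul_le_mul_of_nonneg_left (le_of_eq ?_) hCpos.le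
        rw [← Real.rpow_add' hA0 (by rw [hsum]; positivity), hsum]
    _ = ENNReal.ofReal C * ENNReal.ofReal (A ^ (1 / q₀)) := by
        rw [ENNReal.ofReal_mul hCpos.le]
    _ = ENNReal.ofReal C * I ^ (1 / q₀) := by
        rw [hIA, ENNReal.ofReal_rpow_of_nonneg hA0 (by positivity)]
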